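/- arXiv:2410.07556 — 6 statements merged into one kernel-verified Lean document; each statement's English description precedes it below -/
import Mathlib

section
/- Let G be a finite 2-group acting faithfully on a finite set X. Then there exists a function f : X → {1,2,3} such that there is no nontrivial g ∈ G with f(g·x) = f(x) for all x ∈ X. -/
open MulAction Pointwise

namespace TwoGroupColoringAux

/-- The 3-cycle `1 → 2 → 3 → 1` on `ℕ`. -/
def pic : ℕ → ℕ := fun n => if n = 1 then 2 else if n = 2 then 3 else if n = 3 then 1 else n

lemma pic_mem {n : ℕ} (h : n ∈ ({1, 2, 3} : Set ℕ)) : pic n ∈ ({1, 2, 3} : Set ℕ) := by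
  simp only [Set.mem_insert_iff, Set.mem_singleton_iff] at h ⊢
  rcases h with rfl | rfl | rfl <;> simp [pic]

lemma pic_injOn {a b : ℕ} (ha : a ∈ ({1, 2, 3} : Set ℕ)) (hb : b ∈ ({1, 2, 3} : Set ℕ))
    (h : pic a = pic b) : a = b := by
  simp only [Set.mem_insert_iff, Set.mem_singleton_iff] at ha hb
  rcases ha with rfl | rfl | rfl <;> rcases hb with rfl | rfl | rfl <;> simp_all [pic]

lemma pic_three {a : ℕ} (ha : a ∈ ({1, 2, 3} : Set ℕ)) : pic^[3] a = a := by
  simp only [Set.mem_insert_iff, Set.mem_singleton_iff] at ha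
  rcases ha with rfl | rfl | rfl <;> rfl

lemma pic_mul3 (q r : ℕ) {a : ℕ} (ha : a ∈ ({1, 2, 3} : Set ℕ)) :
    pic^[3 * q + r] a = pic^[r] a := by
  induction q with
  | zero => simp
  | succ q ih =>
    have h : 3 * (q + 1) + r = (3 * q + r) + 3 := by ring
    rw [h, Function.iterate_add_apply, pic_three ha, ih]

lemma two_pow_mod3 (k : ℕ) : 2 ^ k % 3 = 1 ∨ 2 ^ k % 3 = 2 := by
  induction k with
  | zero => left; rfl
  | succ k ih =>
    rw [pow_succ, Nat.mul_mod]
    rcases ih with h | h <;> rw [h] <;> simp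

lemma pic_pow_ne {a : ℕ} (ha : a ∈ ({1, 2, 3} : Set ℕ)) (k : ℕ) : pic^[2 ^ k] a ≠ a := by
  have h1 : pic^[2 ^ k] a = pic^[2 ^ k % 3] a := by
    conv_lhs => rw [← Nat.div_add_mod (2 ^ k) 3]
    exact pic_mul3 _ _ ha
  rw [h1]
  have ha' := ha
  simp only [Set.mem_insert_iff, Set.mem_singleton_iff] at ha'
  rcases two_pow_mod3 k with h | h <;> rw [h] <;> rcases ha' with rfl | rfl | rfl <;> decide

variable {G : Type*} [Group G] {X : Type*} [MulAction G X]

/-- Restriction of the action of a subgroup `H` to an invariant set `S`, as a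
homomorphism to `Equiv.Perm S`. -/
def resPerm (H : Subgroup G) (S : Set X) (hS : ∀ (g : H) (x : X), x ∈ S → (g : G) • x ∈ S) :
    H →* Equiv.Perm S where
  toFun g :=
    { toFun := fun x => ⟨(g : G) • x, hS g x x.2⟩
      invFun := fun x => ⟨(g : G)⁻¹ • x, by simpa using hS g⁻¹ x x.2⟩
      left_inv := fun x => Subtype.ext (inv_smul_smul _ _)
      right_inv := fun x => Subtype.ext (smul_inv_smul _ _) }
  map_one' := Equiv.ext fun x => Subtype.ext (by simp)
  map_mul' g h := Equiv.ext fun x => Subtype.ext (by simp [mul_smul])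

@[simp] lemma resPerm_apply (H : Subgroup G) (S : Set X) (hS) (g : H) (x : S) :
    (resPerm H S hS g x : X) = (g : G) • (x : X) := rfl

lemma isPGroup_range {H K : Type*} [Group H] [Group K] (hH : IsPGroup 2 H) (ρ : H →* K) :
    IsPGroup 2 ρ.range := by
  rw [MonoidHom.range_eq_map]
  exact (hH.to_subgroup ⊤).map ρ

lemma exists_block (G X : Type*) [Group G] [Finite G] [MulAction G X] [Finite X]
    (hG : IsPGroup 2 G) (h2 : 2 ≤ Nat.card X) :
    ∃ B : Set X, B.Nonempty ∧ Bᶜ.Nonempty ∧ ∀ g : G, g • B = B ∨ g • B = Bᶜ := by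
  have hnt : Nontrivial X := Finite.one_lt_card_iff_nontrivial.mp h2
  obtain ⟨x₀, y₀, hxy⟩ := exists_pair_ne X
  by_cases htr : ∀ y : X, y ∈ MulAction.orbit G x₀
  · -- transitive case
    have hH : stabilizer G x₀ ≠ ⊤ := by
      obtain ⟨g, hg⟩ := MulAction.mem_orbit_iff.mp (htr y₀)
      intro htop
      have : g ∈ stabilizer G x₀ := htop ▸ Subgroup.mem_top g
      rw [MulAction.mem_stabilizer_iff] at this
      exact hxy (by rw [← hg, this])
    haveI : Fact (Nat.Prime 2) := ⟨Nat.prime_two⟩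
    obtain ⟨cG, hcG⟩ := IsPGroup.iff_card.mp hG
    obtain ⟨a, ha⟩ := IsPGroup.iff_card.mp (hG.to_subgroup (stabilizer G x₀))
    have halt : a < cG := by
      have hdvd : (2:ℕ) ^ a ∣ 2 ^ cG := by
        rw [← ha, ← hcG]; exact Subgroup.card_subgroup_dvd_card _
      have hle : a ≤ cG := (Nat.pow_dvd_pow_iff_le_right one_lt_two).mp hdvd
      rcases lt_or_eq_of_le hle with h | h
      · exact h
      · exfalso; exact hH (Subgroup.eq_top_of_card_eq _ (by rw [ha, hcG, h]))
    obtain ⟨M, hMcard, hHM⟩ := Sylow.exists_subgroup_card_pow_prime_le 2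
      (n := a) (m := cG - 1) (by rw [hcG]; exact pow_dvd_pow 2 (by omega)) _ ha (by omega)
    have hMidx : M.index = 2 := by
      have h := Subgroup.card_mul_index M
      rw [hMcard, hcG] at h
      have h2' : (2:ℕ) ^ cG = 2 ^ (cG - 1) * 2 := by
        rw [← pow_succ]; congr 1; omega
      rw [h2'] at h
      exact Nat.eq_of_mul_eq_mul_left (pow_pos (by norm_num) _) h
    have hstab : ∀ g : G, g • x₀ = x₀ → g ∈ M := fun g hg => hHM hg
    -- B is the M-orbit of x₀
    refine ⟨(fun g : G => g • x₀) '' M, ⟨x₀, 1, M.one_mem, one_smul _ _⟩, ?_, ?_⟩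
    · -- complement nonempty
      have hMne : M ≠ ⊤ := by
        intro h; rw [h, Subgroup.index_top] at hMidx; norm_num at hMidx
      obtain ⟨s, hs⟩ : ∃ s : G, s ∉ M := by
        by_contra h; push_neg at h; exact hMne ((Subgroup.eq_top_iff' M).mpr h)
      refine ⟨s • x₀, ?_⟩
      rintro ⟨m, hm, hms⟩
      have hms' : m • x₀ = s • x₀ := hms
      have hsm : s⁻¹ * m ∈ M := hstab _ (by rw [mul_smul, hms', inv_smul_smul])
      have hs' : s⁻¹ ∈ M := by simpa [mul_assoc] using mul_mem hsm (inv_mem hm)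
      exact hs (by simpa using inv_mem hs')
    · intro g
      by_cases hg : g ∈ M
      · left
        ext y
        simp only [Set.mem_smul_set, Set.mem_image, SetLike.mem_coe]
        constructor
        · rintro ⟨-, ⟨m, hm, rfl⟩, rfl⟩
          exact ⟨g * m, mul_mem hg hm, mul_smul g m x₀⟩
        · rintro ⟨m, hm, rfl⟩
          exact ⟨(g⁻¹ * m) • x₀, ⟨g⁻¹ * m, mul_mem (inv_mem hg) hm, rfl⟩,
            by rw [← mul_smul, mul_inv_cancel_left]⟩
      · right
        ext y
        simp only [Set.mem_smul_set, Set.mem_image, SetLike.mem_coe, Set.mem_compl_iff]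
        constructor
        · rintro ⟨-, ⟨m, hm, rfl⟩, rfl⟩ ⟨m', hm', he⟩
          have h1 : (g * m)⁻¹ * m' ∈ M := hstab _ (by
            rw [mul_smul, he, ← mul_smul g m x₀, ← mul_smul, inv_mul_cancel, one_smul])
          have h2 : (g * m)⁻¹ ∈ M := by simpa [mul_assoc] using mul_mem h1 (inv_mem hm')
          have h3 : g * m ∈ M := by simpa using inv_mem h2
          exact hg (by simpa [mul_assoc] using mul_mem h3 (inv_mem hm))
        · intro hy
          obtain ⟨k, hk⟩ := MulAction.mem_orbit_iff.mp (htr y)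
          have hkM : k ∉ M := fun h => hy ⟨k, h, hk⟩
          have hgk : g⁻¹ * k ∈ M := by
            rw [Subgroup.mul_mem_iff_of_index_two hMidx]
            simp [hg, hkM]
          exact ⟨(g⁻¹ * k) • x₀, ⟨g⁻¹ * k, hgk, rfl⟩, by
            rw [← mul_smul, mul_inv_cancel_left, hk]⟩
  · push_neg at htr
    obtain ⟨y, hy⟩ := htr
    exact ⟨orbit G x₀, ⟨x₀, mem_orbit_self x₀⟩, ⟨y, hy⟩, fun g => Or.inl (smul_orbit g x₀)⟩

/-- Combine colorings on `B` and `Bᶜ`, applying `π` to the colors on `Bᶜ`. -/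
def comb {X : Type*} (B : Set X) [DecidablePred (· ∈ B)] (fB : ↥B → ℕ) (fC : ↥(Bᶜ) → ℕ)
    (π : ℕ → ℕ) (x : X) : ℕ :=
  if hx : x ∈ B then fB ⟨x, hx⟩ else π (fC ⟨x, hx⟩)

lemma comb_pos {X : Type*} (B : Set X) [DecidablePred (· ∈ B)] (fB : ↥B → ℕ) (fC : ↥(Bᶜ) → ℕ)
    (π : ℕ → ℕ) {x : X} (hx : x ∈ B) : comb B fB fC π x = fB ⟨x, hx⟩ := dif_pos hx

lemma comb_neg {X : Type*} (B : Set X) [DecidablePred (· ∈ B)] (fB : ↥B → ℕ) (fC : ↥(Bᶜ) → ℕ)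
    (π : ℕ → ℕ) {x : X} (hx : x ∉ B) : comb B fB fC π x = π (fC ⟨x, hx⟩) := dif_neg hx

universe u

theorem aux : ∀ (n : ℕ) (G X : Type u) [Group G] [Finite G] [MulAction G X]
    [FaithfulSMul G X] [Finite X], IsPGroup 2 G → Nat.card X = n →
    ∃ f : X → ℕ, (∀ x : X, f x ∈ ({1, 2, 3} : Set ℕ)) ∧
      ∀ g : G, (∀ x : X, f (g • x) = f x) → g = 1 := by
  intro n
  induction n using Nat.strong_induction_on with
  | _ n IH =>
  intro G X _ _ _ _ _ hG hn
  by_cases hsmall : Nat.card X ≤ 1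
  · haveI : Subsingleton X := Finite.card_le_one_iff_subsingleton.mp hsmall
    refine ⟨fun _ => 1, fun x => by simp, fun g hg => ?_⟩
    refine eq_of_smul_eq_smul fun x : X => ?_
    rw [one_smul]; exact Subsingleton.elim _ _
  · obtain ⟨B, hBne, hBcne, hblk⟩ := exists_block G X hG (by omega)
    classical
    set M : Subgroup G :=
      { carrier := {g : G | g • B = B}
        one_mem' := one_smul G B
        mul_mem' := fun {g h} hg hh => by
          simp only [Set.mem_setOf_eq] at *; rw [mul_smul, hh, hg]
        inv_mem' := fun {g} hg => by
          simp only [Set.mem_setOf_eq] at *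
          exact inv_smul_eq_iff.mpr hg.symm } with hM
    have hMmem : ∀ g : G, g ∈ M ↔ g • B = B := fun g => Iff.rfl
    have hMB : ∀ g : G, g ∈ M → ∀ x : X, g • x ∈ B ↔ x ∈ B := by
      intro g hg x
      conv_lhs => rw [← (hMmem g).mp hg]
      exact Set.smul_mem_smul_set_iff
    set K : Subgroup G :=
      { carrier := {g : G | ∀ x ∈ B, g • x = x}
        one_mem' := fun x _ => one_smul G x
        mul_mem' := fun {g h} hg hh x hx => by rw [mul_smul, hh x hx, hg x hx]
        inv_mem' := fun {g} hg x hx => inv_smul_eq_iff.mpr (hg x hx).symm } with hK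
    have hKM : ∀ g : G, g ∈ K → g ∈ M := by
      intro g hg
      rw [hMmem]
      ext y
      simp only [Set.mem_smul_set]
      constructor
      · rintro ⟨x, hx, rfl⟩; rw [hg x hx]; exact hx
      · intro hy; exact ⟨y, hy, hg y hy⟩
    have hMBres : ∀ (g : M) (x : X), x ∈ B → (g : G) • x ∈ B :=
      fun g x hx => (hMB g g.2 x).mpr hx
    have hKc : ∀ (g : K) (x : X), x ∈ Bᶜ → (g : G) • x ∈ Bᶜ := by
      intro g x hx hmem
      exact hx ((hMB g (hKM g g.2) x).mp hmem)
    set ρB := resPerm M B hMBres with hρB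
    set ρC := resPerm K Bᶜ hKc with hρC
    have hcardB : Nat.card ↥B < n := by
      rw [← hn, Nat.card_coe_set_eq, ← Set.ncard_univ]
      exact Set.ncard_lt_ncard
        (Set.ssubset_univ_iff.mpr (Set.nonempty_compl.mp hBcne)) (Set.toFinite _)
    have hcardC : Nat.card ↥(Bᶜ) < n := by
      rw [← hn, Nat.card_coe_set_eq, ← Set.ncard_univ]
      refine Set.ncard_lt_ncard (Set.ssubset_univ_iff.mpr ?_) (Set.toFinite _)
      exact Set.nonempty_compl.mp (by rw [compl_compl]; exact hBne)
    obtain ⟨fB, hfBmem, hfBstab⟩ := IH (Nat.card ↥B) hcardB ↥ρB.range ↥B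
      (isPGroup_range (hG.to_subgroup M) ρB) rfl
    obtain ⟨fC, hfCmem, hfCstab⟩ := IH (Nat.card ↥(Bᶜ)) hcardC ↥ρC.range ↥(Bᶜ)
      (isPGroup_range (hG.to_subgroup K) ρC) rfl
    have hfB : ∀ g : M, (∀ x : ↥B, fB (ρB g x) = fB x) → ∀ x : ↥B, (g : G) • (x : X) = x := by
      intro g hpres x
      have h1 : (⟨ρB g, ⟨g, rfl⟩⟩ : ρB.range) = 1 := hfBstab _ fun y => hpres y
      have h2 : ρB g = 1 := by simpa using Subtype.ext_iff.mp h1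
      have h3 : ρB g x = x := by rw [h2]; rfl
      exact congrArg Subtype.val h3
    have hfC : ∀ g : K, (∀ y : ↥(Bᶜ), fC (ρC g y) = fC y) →
        ∀ y : ↥(Bᶜ), (g : G) • (y : X) = y := by
      intro g hpres y
      have h1 : (⟨ρC g, ⟨g, rfl⟩⟩ : ρC.range) = 1 := hfCstab _ fun y => hpres y
      have h2 : ρC g = 1 := by simpa using Subtype.ext_iff.mp h1
      have h3 : ρC g y = y := by rw [h2]; rfl
      exact congrArg Subtype.val h3
    have hmem : ∀ π : ℕ → ℕ, (∀ a ∈ ({1, 2, 3} : Set ℕ), π a ∈ ({1, 2, 3} : Set ℕ)) →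
        ∀ x : X, comb B fB fC π x ∈ ({1, 2, 3} : Set ℕ) := by
      intro π hπ x
      by_cases hx : x ∈ B
      · rw [comb_pos _ _ _ _ hx]; exact hfBmem _
      · rw [comb_neg _ _ _ _ hx]; exact hπ _ (hfCmem _)
    have key : ∀ π : ℕ → ℕ,
        (∀ a ∈ ({1, 2, 3} : Set ℕ), ∀ b ∈ ({1, 2, 3} : Set ℕ), π a = π b → a = b) →
        ∀ g : G, g ∈ M → (∀ x : X, comb B fB fC π (g • x) = comb B fB fC π x) → g = 1 := by
      intro π hπ g hgM hpres
      have hgB : ∀ x : ↥B, g • (x : X) = x := by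
        apply hfB ⟨g, hgM⟩
        intro x
        have hx := hpres x
        have hgx : g • (x : X) ∈ B := hMBres ⟨g, hgM⟩ x x.2
        rw [comb_pos _ _ _ _ hgx, comb_pos _ _ _ _ x.2] at hx
        exact hx
      have hgK : g ∈ K := fun x hx => hgB ⟨x, hx⟩
      have hgC : ∀ y : ↥(Bᶜ), g • (y : X) = y := by
        apply hfC ⟨g, hgK⟩
        intro y
        have hy := hpres y
        have hy2 : (y : X) ∉ B := y.2
        have hgy : g • (y : X) ∉ B := hKc ⟨g, hgK⟩ y y.2
        rw [comb_neg _ _ _ _ hgy, comb_neg _ _ _ _ hy2] at hy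
        exact hπ _ (hfCmem _) _ (hfCmem _) hy
      refine eq_of_smul_eq_smul fun x : X => ?_
      rw [one_smul]
      by_cases hx : x ∈ B
      · exact hgB ⟨x, hx⟩
      · exact hgC ⟨x, hx⟩
    by_cases h0 : ∀ g : G, (∀ x : X, comb B fB fC id (g • x) = comb B fB fC id x) → g = 1
    · exact ⟨comb B fB fC id, hmem id fun a ha => ha, h0⟩
    · push_neg at h0
      obtain ⟨g₀, hpres0, hg₀ne⟩ := h0
      refine ⟨comb B fB fC pic, hmem pic fun a ha => pic_mem ha, ?_⟩
      intro g₁ hpres1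
      by_contra hg₁ne
      have hg₀M : g₀ ∉ M := fun h => hg₀ne (key id (fun a _ b _ h => h) g₀ h hpres0)
      have hg₁M : g₁ ∉ M := fun h =>
        hg₁ne (key pic (fun a ha b hb h => pic_injOn ha hb h) g₁ h hpres1)
      have hb₀ : g₀ • B = Bᶜ := (hblk g₀).resolve_left hg₀M
      have hb₁ : g₁ • B = Bᶜ := (hblk g₁).resolve_left hg₁M
      have hmM : g₁ * g₀ ∈ M := by
        rw [hMmem, mul_smul, hb₀, Set.smul_set_compl, hb₁, compl_compl]
      have hxB : ∀ x ∈ B, g₀ • x ∉ B := by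
        intro x hx
        have h : g₀ • x ∈ Bᶜ := hb₀ ▸ Set.smul_mem_smul_set hx
        exact h
      have hrel : ∀ x ∈ B, comb B fB fC id ((g₁ * g₀) • x) = pic (comb B fB fC id x) := by
        intro x hx
        have h1 : (g₁ * g₀) • x ∈ B := (hMB _ hmM x).mpr hx
        have h2 : g₀ • x ∉ B := hxB x hx
        have e1 : comb B fB fC id ((g₁ * g₀) • x) = comb B fB fC pic ((g₁ * g₀) • x) := by
          rw [comb_pos _ _ _ _ h1, comb_pos _ _ _ _ h1]
        rw [e1, mul_smul, hpres1 (g₀ • x), comb_neg _ _ _ _ h2]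
        congr 1
        have h3 := hpres0 x
        rw [comb_neg _ _ _ _ h2] at h3
        simpa using h3
      have hiter : ∀ j : ℕ, ∀ x ∈ B,
          comb B fB fC id ((g₁ * g₀) ^ j • x) = pic^[j] (comb B fB fC id x) := by
        intro j
        induction j with
        | zero => intro x hx; simp
        | succ j ih =>
          intro x hx
          have hxj : (g₁ * g₀) ^ j • x ∈ B := (hMB _ (pow_mem hmM j) x).mpr hx
          rw [pow_succ', mul_smul, hrel _ hxj, ih x hx, Function.iterate_succ_apply']
      obtain ⟨k, hk⟩ := hG (g₁ * g₀)
      obtain ⟨x₀, hx₀⟩ := hBne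
      have hfin := hiter (2 ^ k) x₀ hx₀
      rw [hk, one_smul] at hfin
      exact pic_pow_ne (hmem id (fun a ha => ha) x₀) k hfin.symm


end TwoGroupColoringAux

/-- If a finite `2`-group `G` acts faithfully on a finite set `X`, then there is a
`3`-coloring `f : X → {1,2,3}` such that the only color-preserving element of `G`
is the identity. -/
theorem two_group_faithful_coloring (G X : Type*) [Group G] [Finite G]
    (hG : IsPGroup 2 G) [MulAction G X] [FaithfulSMul G X] [Finite X] :
    ∃ f : X → ℕ, (∀ x : X, f x ∈ ({1, 2, 3} : Set ℕ)) ∧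
      ∀ g : G, (∀ x : X, f (g • x) = f x) → g = 1 := by
  set ρ := MulAction.toPermHom G X with hρ
  obtain ⟨f, hmem, hstab⟩ := TwoGroupColoringAux.aux (Nat.card X) ↥ρ.range X
    (TwoGroupColoringAux.isPGroup_range hG ρ) rfl
  refine ⟨f, hmem, fun g hg => ?_⟩
  have h1 : (⟨ρ g, ⟨g, rfl⟩⟩ : ρ.range) = 1 := hstab _ fun x => hg x
  have h2 : ρ g = 1 := by simpa using Subtype.ext_iff.mp h1
  refine eq_of_smul_eq_smul fun x : X => ?_
  rw [one_smul]
  have h3 := Equiv.ext_iff.mp h2 x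
  simpa [hρ] using h3
end

section
/- Define, for n ≥ 0 and i ∈ {1,2,3}, integers D_n(i) by D_0(i) = i, D_{n+1}(1) = D_n(1)·D_n(2), D_{n+1}(2) = D_n(1)·D_n(3), and D_{n+1}(3) = D_n(2)·D_n(3). Let G be a finite 2-group acting faithfully and transitively on a finite set X with |X| = 2^n. Then there exist three functions f₁, f₂, f₃ : X → {1,2,3} such that for each i ∈ {1,2,3}: (i) the only g ∈ G satisfying f_i(g·x) = f_i(x) for all x ∈ X is the identity, and (ii) ∏_{x ∈ X} f_i(x) = D_n(i). -/
/-- The integers `D n i` for `i ∈ {1,2,3}`: `D 0 i = i`,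
`D (n+1) 1 = D n 1 * D n 2`, `D (n+1) 2 = D n 1 * D n 3`, `D (n+1) 3 = D n 2 * D n 3`. -/
def D : ℕ → ℕ → ℕ
  | 0, i => i
  | n + 1, 1 => D n 1 * D n 2
  | n + 1, 2 => D n 1 * D n 3
  | n + 1, 3 => D n 2 * D n 3
  | _ + 1, i => i

lemma D_lt (n : ℕ) : 0 < D n 1 ∧ D n 1 < D n 2 ∧ D n 2 < D n 3 := by
  induction n with
  | zero => exact ⟨one_pos, by norm_num [D]⟩
  | succ n ih =>
    obtain ⟨h1, h2, h3⟩ := ih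
    exact ⟨by show 0 < D n 1 * D n 2; nlinarith, by show D n 1 * D n 2 < D n 1 * D n 3; nlinarith,
      by show D n 1 * D n 3 < D n 2 * D n 3; nlinarith⟩

lemma D_inj (n : ℕ) {a b : ℕ} (ha : a ∈ ({1,2,3} : Set ℕ)) (hb : b ∈ ({1,2,3} : Set ℕ))
    (h : D n a = D n b) : a = b := by
  obtain ⟨h1, h2, h3⟩ := D_lt n
  simp only [Set.mem_insert_iff, Set.mem_singleton_iff] at ha hb
  rcases ha with rfl|rfl|rfl <;> rcases hb with rfl|rfl|rfl <;> omega

universe v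

/-- The key induction. -/
theorem aux : ∀ (n : ℕ) (G X : Type v) [Group G] [Finite G] [MulAction G X]
    [FaithfulSMul G X] [MulAction.IsPretransitive G X] [Fintype X],
    IsPGroup 2 G → Nat.card X = 2 ^ n → ∀ i ∈ ({1, 2, 3} : Set ℕ),
    ∃ f : X → ℕ, (∀ x : X, f x ∈ ({1, 2, 3} : Set ℕ)) ∧
      (∀ g : G, (∀ x : X, f (g • x) = f x) → g = 1) ∧ ∏ x : X, f x = D n i := by
  intro n
  induction n with
  | zero =>
    intro G X _ _ _ _ _ _ hG hX i hi
    rw [pow_zero] at hX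
    have hsub : Subsingleton X := (Nat.card_eq_one_iff_unique.mp hX).1
    have hne : Nonempty X := (Nat.card_eq_one_iff_unique.mp hX).2
    refine ⟨fun _ => i, fun _ => hi, ?_, ?_⟩
    · intro g _
      exact eq_of_smul_eq_smul (M := G) (α := X) fun x => Subsingleton.elim _ _
    · rw [Finset.prod_const, Finset.card_univ, ← Nat.card_eq_fintype_card, hX, pow_one]
      rfl
  | succ n ih =>
    intro G X _ _ _ _ _ _ hG hX i hi
    classical
    haveI : Fact (Nat.Prime 2) := ⟨Nat.prime_two⟩
    have hne : Nonempty X := (Nat.card_pos_iff.mp (by rw [hX]; positivity)).1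
    obtain ⟨x₀⟩ := hne
    set S := MulAction.stabilizer G x₀ with hS
    have hSindex : S.index = 2 ^ (n + 1) := by
      rw [hS, MulAction.index_stabilizer_of_transitive, hX]
    have hcardG : Nat.card S * 2 ^ (n + 1) = Nat.card G := by
      rw [← hSindex]; exact S.card_mul_index
    obtain ⟨k, hk⟩ := (IsPGroup.iff_card.mp (hG.to_subgroup S)).imp (fun _ h => h)
    -- |G| = 2 ^ (k + n + 1)
    have hcardG' : Nat.card G = 2 ^ (k + (n + 1)) := by rw [← hcardG, hk, pow_add]; ring
    obtain ⟨H, hHcard, hSH⟩ := Sylow.exists_subgroup_card_pow_prime_le (G := G) 2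
      (n := k) (m := k + n) (by rw [hcardG']; exact pow_dvd_pow 2 (by omega)) S hk (by omega)
    have hHindex : H.index = 2 := by
      have := H.card_mul_index
      rw [hHcard, hcardG'] at this
      have h2 : (2:ℕ) ^ (k + n) * H.index = 2 ^ (k + n) * 2 := by
        rw [this, ← pow_succ]; ring_nf
      exact Nat.eq_of_mul_eq_mul_left (by positivity) h2
    -- pick g₀ ∉ H
    have hHne : H ≠ ⊤ := fun h => by simp [h, Subgroup.index_top] at hHindex
    obtain ⟨g₀, hg₀⟩ : ∃ g : G, g ∉ H := by
      by_contra h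
      push_neg at h
      exact hHne ((Subgroup.eq_top_iff' H).mpr h)
    -- membership multiplication rule
    have hmul : ∀ a b : G, a * b ∈ H ↔ (a ∈ H ↔ b ∈ H) :=
      fun a b => Subgroup.mul_mem_iff_of_index_two hHindex
    set X₁ : Set X := MulAction.orbit H x₀ with hX₁
    set X₂ : Set X := MulAction.orbit H (g₀ • x₀) with hX₂
    -- smul of subgroup elements on X
    have hsub_smul : ∀ (h : H) (x : X), h • x = (h : G) • x := fun _ _ => rfl
    have hmemX₁ : ∀ g : G, g ∈ H → g • x₀ ∈ X₁ := fun g hg => ⟨⟨g, hg⟩, rfl⟩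
    have hmemX₂ : ∀ g : G, g ∉ H → g • x₀ ∈ X₂ := by
      intro g hg
      refine ⟨⟨g * g₀⁻¹, (hmul _ _).mpr (by simp [hg, hg₀, fun h => (hg₀ (H.inv_mem_iff.mp h))])⟩, ?_⟩
      show (g * g₀⁻¹) • g₀ • x₀ = g • x₀
      rw [smul_smul, inv_mul_cancel_right]
    -- elements of X₁ / X₂ : canonical form
    have hX₁elt : ∀ x ∈ X₁, ∃ g ∈ H, g • x₀ = x := by
      rintro x ⟨⟨g, hg⟩, rfl⟩; exact ⟨g, hg, rfl⟩
    have hX₂elt : ∀ x ∈ X₂, ∃ g ∉ H, g • x₀ = x := by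
      rintro x ⟨⟨h, hh⟩, rfl⟩
      refine ⟨h * g₀, fun hmem => ?_, ?_⟩
      · exact hg₀ (((hmul _ _).mp hmem).mp hh)
      · show (h * g₀) • x₀ = (h : G) • g₀ • x₀
        rw [mul_smul]
    have hcover : ∀ x : X, x ∈ X₁ ∨ x ∈ X₂ := by
      intro x
      obtain ⟨g, hg⟩ := MulAction.exists_smul_eq G x₀ x
      by_cases hmem : g ∈ H
      · exact Or.inl (hg ▸ hmemX₁ g hmem)
      · exact Or.inr (hg ▸ hmemX₂ g hmem)
    have hdisj : ∀ x : X, x ∈ X₁ → x ∈ X₂ → False := by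
      intro x h1 h2
      obtain ⟨a, ha, hax⟩ := hX₁elt x h1
      obtain ⟨b, hb, hbx⟩ := hX₂elt x h2
      have : b⁻¹ * a ∈ S := by
        rw [hS, MulAction.mem_stabilizer_iff, mul_smul, hax, ← hbx, inv_smul_smul]
      have hba : b⁻¹ * a ∈ H := hSH this
      exact hb (H.inv_mem_iff.mp (((hmul _ _).mp hba).mpr ha))
    -- smul moves between blocks
    have hmove₁₂ : ∀ g : G, g ∉ H → ∀ x ∈ X₁, g • x ∈ X₂ := by
      intro g hg x hx
      obtain ⟨a, ha, rfl⟩ := hX₁elt x hx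
      rw [smul_smul]
      exact hmemX₂ _ (fun hmem => hg (((hmul _ _).mp hmem).mpr ha))
    have hmove₂₁ : ∀ g : G, g ∉ H → ∀ x ∈ X₂, g • x ∈ X₁ := by
      intro g hg x hx
      obtain ⟨a, ha, rfl⟩ := hX₂elt x hx
      rw [smul_smul]
      exact hmemX₁ _ ((hmul _ _).mpr (by simp [hg, ha]))
    have hmove₁₁ : ∀ g : G, g ∈ H → ∀ x ∈ X₁, g • x ∈ X₁ := by
      intro g hg x hx
      obtain ⟨a, ha, rfl⟩ := hX₁elt x hx
      rw [smul_smul]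
      exact hmemX₁ _ (H.mul_mem hg ha)
    have hmove₂₂ : ∀ g : G, g ∈ H → ∀ x ∈ X₂, g • x ∈ X₂ := by
      intro g hg x hx
      obtain ⟨a, ha, rfl⟩ := hX₂elt x hx
      rw [smul_smul]
      exact hmemX₂ _ (fun hmem => ha (((hmul _ _).mp hmem).mp hg))
    have hginv : ∀ g : G, g ∉ H → g⁻¹ ∉ H := fun g hg h => hg (H.inv_mem_iff.mp h)
    -- cardinalities
    have hcard₁₂ : Nat.card ↥X₁ = Nat.card ↥X₂ := by
      refine Nat.card_congr ⟨fun y => ⟨g₀ • (y : X), hmove₁₂ g₀ hg₀ _ y.2⟩,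
        fun z => ⟨g₀⁻¹ • (z : X), hmove₂₁ g₀⁻¹ (hginv g₀ hg₀) _ z.2⟩, fun y => ?_, fun z => ?_⟩
      · exact Subtype.ext (by simp)
      · exact Subtype.ext (by simp)
    have hsum : Nat.card ↥X₁ + Nat.card ↥X₂ = 2 ^ (n + 1) := by
      rw [Nat.card_coe_set_eq, Nat.card_coe_set_eq, ← Set.ncard_union_eq
        (Set.disjoint_left.mpr (fun x h1 h2 => hdisj x h1 h2)) (Set.toFinite _) (Set.toFinite _)]
      have huniv : X₁ ∪ X₂ = Set.univ := Set.eq_univ_iff_forall.mpr (fun x => hcover x)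
      rw [huniv, Set.ncard_univ, hX]
    have hcard₁ : Nat.card ↥X₁ = 2 ^ n := by
      rw [hcard₁₂] at hsum ⊢
      omega
    have hcard₂ : Nat.card ↥X₂ = 2 ^ n := by rw [← hcard₁₂]; exact hcard₁
    have coe_smul₁ : ∀ (h : ↥H) (y : ↥X₁), ((h • y : ↥X₁) : X) = (h : G) • (y : X) :=
      fun h y => (MulAction.orbit.coe_smul).trans (hsub_smul h y)
    have coe_smul₂ : ∀ (h : ↥H) (y : ↥X₂), ((h • y : ↥X₂) : X) = (h : G) • (y : X) :=
      fun h y => (MulAction.orbit.coe_smul).trans (hsub_smul h y)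
    -- permutation images
    set φ₁ := MulAction.toPermHom ↥H ↥X₁ with hφ₁
    set φ₂ := MulAction.toPermHom ↥H ↥X₂ with hφ₂
    set Q₁ := φ₁.range with hQ₁
    set Q₂ := φ₂.range with hQ₂
    haveI : Finite ↥Q₁ := Finite.of_surjective _ φ₁.rangeRestrict_surjective
    haveI : Finite ↥Q₂ := Finite.of_surjective _ φ₂.rangeRestrict_surjective
    have smulQ₁ : ∀ (q : ↥Q₁) (y : ↥X₁), q • y = (q : Equiv.Perm ↥X₁) y := fun _ _ => rfl
    have smulQ₂ : ∀ (q : ↥Q₂) (y : ↥X₂), q • y = (q : Equiv.Perm ↥X₂) y := fun _ _ => rfl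
    haveI : FaithfulSMul ↥Q₁ ↥X₁ :=
      ⟨fun {q r} h => Subtype.ext (Equiv.ext fun y => by
        rw [← smulQ₁ q y, ← smulQ₁ r y]; exact h y)⟩
    haveI : FaithfulSMul ↥Q₂ ↥X₂ :=
      ⟨fun {q r} h => Subtype.ext (Equiv.ext fun y => by
        rw [← smulQ₂ q y, ← smulQ₂ r y]; exact h y)⟩
    have φ₁app : ∀ (h : ↥H) (y : ↥X₁), φ₁ h y = h • y := fun _ _ => rfl
    have φ₂app : ∀ (h : ↥H) (y : ↥X₂), φ₂ h y = h • y := fun _ _ => rfl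
    haveI : MulAction.IsPretransitive ↥Q₁ ↥X₁ := by
      constructor
      intro c d
      obtain ⟨h, hh⟩ := MulAction.exists_smul_eq ↥H c d
      exact ⟨⟨φ₁ h, MonoidHom.mem_range.mpr ⟨h, rfl⟩⟩, by rw [smulQ₁]; exact hh⟩
    haveI : MulAction.IsPretransitive ↥Q₂ ↥X₂ := by
      constructor
      intro c d
      obtain ⟨h, hh⟩ := MulAction.exists_smul_eq ↥H c d
      exact ⟨⟨φ₂ h, MonoidHom.mem_range.mpr ⟨h, rfl⟩⟩, by rw [smulQ₂]; exact hh⟩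
    have hPQ₁ : IsPGroup 2 ↥Q₁ :=
      IsPGroup.of_surjective (hG.to_subgroup H) φ₁.rangeRestrict φ₁.rangeRestrict_surjective
    have hPQ₂ : IsPGroup 2 ↥Q₂ :=
      IsPGroup.of_surjective (hG.to_subgroup H) φ₂.rangeRestrict φ₂.rangeRestrict_surjective
    -- choose the two colors
    obtain ⟨a, b, ha, hb, hab, hD⟩ : ∃ a b : ℕ, a ∈ ({1,2,3} : Set ℕ) ∧ b ∈ ({1,2,3} : Set ℕ) ∧
        a ≠ b ∧ D n a * D n b = D (n + 1) i := by
      simp only [Set.mem_insert_iff, Set.mem_singleton_iff] at hi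
      rcases hi with rfl | rfl | rfl
      · exact ⟨1, 2, by norm_num, by norm_num, by norm_num, rfl⟩
      · exact ⟨1, 3, by norm_num, by norm_num, by norm_num, rfl⟩
      · exact ⟨2, 3, by norm_num, by norm_num, by norm_num, rfl⟩
    obtain ⟨fA, hfA1, hfA2, hfA3⟩ := ih ↥Q₁ ↥X₁ hPQ₁ hcard₁ a ha
    obtain ⟨fB, hfB1, hfB2, hfB3⟩ := ih ↥Q₂ ↥X₂ hPQ₂ hcard₂ b hb
    -- rigidity on blocks translated to pointwise fixing
    have rigidA : ∀ h : ↥H, (∀ y : ↥X₁, fA (h • y) = fA y) → ∀ y : ↥X₁, h • y = y := by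
      intro h hfix y
      have hq1 : (⟨φ₁ h, MonoidHom.mem_range.mpr ⟨h, rfl⟩⟩ : ↥Q₁) = 1 := by
        apply hfA2
        intro z
        rw [smulQ₁]
        exact hfix z
      have h1 : φ₁ h = 1 := congrArg Subtype.val hq1
      have h2 := congrFun (congrArg (fun (e : Equiv.Perm ↥X₁) => (e : ↥X₁ → ↥X₁)) h1) y
      simpa [← φ₁app] using h2
    have rigidB : ∀ h : ↥H, (∀ y : ↥X₂, fB (h • y) = fB y) → ∀ y : ↥X₂, h • y = y := by
      intro h hfix y
      have hq1 : (⟨φ₂ h, MonoidHom.mem_range.mpr ⟨h, rfl⟩⟩ : ↥Q₂) = 1 := by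
        apply hfB2
        intro z
        rw [smulQ₂]
        exact hfix z
      have h1 : φ₂ h = 1 := congrArg Subtype.val hq1
      have h2 := congrFun (congrArg (fun (e : Equiv.Perm ↥X₂) => (e : ↥X₂ → ↥X₂)) h1) y
      simpa [← φ₂app] using h2
    -- the coloring
    have hiff : ∀ x : X, ¬x ∈ X₁ ↔ x ∈ X₂ :=
      fun x => ⟨fun h => (hcover x).resolve_left h, fun h2 h1 => hdisj x h1 h2⟩
    set F : X → ℕ :=
      fun x => if hx : x ∈ X₁ then fA ⟨x, hx⟩ else fB ⟨x, (hcover x).resolve_left hx⟩ with hF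
    have hFA : ∀ (x : X) (hx : x ∈ X₁), F x = fA ⟨x, hx⟩ := by
      intro x hx
      show (if hx : x ∈ X₁ then fA ⟨x, hx⟩ else fB ⟨x, (hcover x).resolve_left hx⟩) = fA ⟨x, hx⟩
      rw [dif_pos hx]
    have hFB : ∀ (x : X) (hx : x ∈ X₂), F x = fB ⟨x, hx⟩ := by
      intro x hx
      have hx1 : x ∉ X₁ := fun h1 => hdisj x h1 hx
      show (if hx : x ∈ X₁ then fA ⟨x, hx⟩ else fB ⟨x, (hcover x).resolve_left hx⟩) = fB ⟨x, hx⟩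
      rw [dif_neg hx1]
    have hPA : ∏ y : ↥X₁, F ↑y = D n a := by
      rw [← hfA3]
      exact Finset.prod_congr rfl fun y _ => by rw [hFA _ y.2, Subtype.coe_eta]
    have hPB : ∏ z : ↥X₂, F ↑z = D n b := by
      rw [← hfB3]
      exact Finset.prod_congr rfl fun z _ => by rw [hFB _ z.2, Subtype.coe_eta]
    refine ⟨F, ?_, ?_, ?_⟩
    · intro x
      by_cases hx : x ∈ X₁
      · rw [hFA x hx]; exact hfA1 _
      · rw [hFB x ((hcover x).resolve_left hx)]; exact hfB1 _
    · intro g hgfix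
      by_cases hgH : g ∈ H
      · have fixA : ∀ y : ↥X₁, (⟨g, hgH⟩ : ↥H) • y = y := by
          apply rigidA
          intro y
          have m1 : g • (y : X) ∈ X₁ := hmove₁₁ g hgH _ y.2
          have e1 : ((⟨g, hgH⟩ : ↥H) • y : ↥X₁) = ⟨g • (y : X), m1⟩ :=
            Subtype.ext (coe_smul₁ _ _)
          rw [e1, ← hFA _ m1, ← (hFA _ y.2).trans (congrArg fA (Subtype.coe_eta _ _))]
          exact hgfix ↑y
        have fixB : ∀ y : ↥X₂, (⟨g, hgH⟩ : ↥H) • y = y := by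
          apply rigidB
          intro y
          have m1 : g • (y : X) ∈ X₂ := hmove₂₂ g hgH _ y.2
          have e1 : ((⟨g, hgH⟩ : ↥H) • y : ↥X₂) = ⟨g • (y : X), m1⟩ :=
            Subtype.ext (coe_smul₂ _ _)
          rw [e1, ← hFB _ m1, ← (hFB _ y.2).trans (congrArg fB (Subtype.coe_eta _ _))]
          exact hgfix ↑y
        have hfixall : ∀ x : X, g • x = x := by
          intro x
          rcases hcover x with hx | hx
          · have h3 := congrArg Subtype.val (fixA ⟨x, hx⟩)
            rw [coe_smul₁] at h3
            exact h3
          · have h3 := congrArg Subtype.val (fixB ⟨x, hx⟩)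
            rw [coe_smul₂] at h3
            exact h3
        exact eq_of_smul_eq_smul fun x => by rw [hfixall x, one_smul]
      · exfalso
        have hswap : ∏ z : ↥X₂, F ↑z = ∏ y : ↥X₁, F ↑y := by
          rw [← Fintype.prod_equiv
            (⟨fun y => ⟨g • ↑y, hmove₁₂ g hgH _ y.2⟩,
              fun z => ⟨g⁻¹ • ↑z, hmove₂₁ g⁻¹ (hginv g hgH) _ z.2⟩,
              fun y => Subtype.ext (by simp), fun z => Subtype.ext (by simp)⟩ : ↥X₁ ≃ ↥X₂)
            (fun y => F (g • ↑y)) (fun z => F ↑z) (fun y => rfl)]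
          exact Finset.prod_congr rfl fun y _ => hgfix ↑y
        exact hab (D_inj n ha hb (by rw [← hPA, ← hPB, hswap]))
    · rw [← hD, ← Fintype.prod_subtype_mul_prod_subtype (fun x => x ∈ X₁) F]
      have h2 : ∏ y : {x // ¬x ∈ X₁}, F ↑y = ∏ z : ↥X₂, F ↑z :=
        Fintype.prod_equiv (Equiv.subtypeEquivRight hiff) _ _ fun y => rfl
      rw [h2, hPA, hPB]


/-- If a finite `2`-group `G` acts faithfully and transitively on a finite set `X` with
`|X| = 2 ^ n`, then there are three `3`-colorings `f₁, f₂, f₃ : X → {1,2,3}` such that for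
each `i`, the only color-preserving element of `G` is the identity and `∏_{x} fᵢ x = D n i`. -/
theorem two_group_transitive_three_colorings (n : ℕ) (G X : Type*) [Group G] [Finite G]
    (hG : IsPGroup 2 G) [MulAction G X] [FaithfulSMul G X]
    [MulAction.IsPretransitive G X] [Fintype X] (hX : Nat.card X = 2 ^ n) :
    ∃ f₁ f₂ f₃ : X → ℕ,
      ((∀ x : X, f₁ x ∈ ({1, 2, 3} : Set ℕ)) ∧
        (∀ g : G, (∀ x : X, f₁ (g • x) = f₁ x) → g = 1) ∧ ∏ x : X, f₁ x = D n 1) ∧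
      ((∀ x : X, f₂ x ∈ ({1, 2, 3} : Set ℕ)) ∧
        (∀ g : G, (∀ x : X, f₂ (g • x) = f₂ x) → g = 1) ∧ ∏ x : X, f₂ x = D n 2) ∧
      ((∀ x : X, f₃ x ∈ ({1, 2, 3} : Set ℕ)) ∧
        (∀ g : G, (∀ x : X, f₃ (g • x) = f₃ x) → g = 1) ∧ ∏ x : X, f₃ x = D n 3) := by
  classical
  set φ := MulAction.toPermHom G X with hφ
  set Q := φ.range with hQ
  haveI : Finite ↥Q := Finite.of_surjective _ φ.rangeRestrict_surjective
  have smulQ : ∀ (q : ↥Q) (x : X), q • x = (q : Equiv.Perm X) x := fun _ _ => rfl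
  haveI : FaithfulSMul ↥Q X :=
    ⟨fun {q r} h => Subtype.ext (Equiv.ext fun y => by
      rw [← smulQ q y, ← smulQ r y]; exact h y)⟩
  haveI : MulAction.IsPretransitive ↥Q X := by
    constructor
    intro c d
    obtain ⟨g, hg⟩ := MulAction.exists_smul_eq G c d
    exact ⟨⟨φ g, MonoidHom.mem_range.mpr ⟨g, rfl⟩⟩, by rw [smulQ]; exact hg⟩
  have hPQ : IsPGroup 2 ↥Q :=
    IsPGroup.of_surjective hG φ.rangeRestrict φ.rangeRestrict_surjective
  have hinj : Function.Injective φ := MulAction.toPerm_injective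
  have htrans : ∀ f : X → ℕ, (∀ q : ↥Q, (∀ x : X, f (q • x) = f x) → q = 1) →
      ∀ g : G, (∀ x : X, f (g • x) = f x) → g = 1 := by
    intro f hf g hg
    have hq : (⟨φ g, MonoidHom.mem_range.mpr ⟨g, rfl⟩⟩ : ↥Q) = 1 :=
      hf _ (fun x => by rw [smulQ]; exact hg x)
    have h1 : φ g = 1 := congrArg Subtype.val hq
    exact hinj (h1.trans (map_one φ).symm)
  obtain ⟨f₁, h11, h12, h13⟩ := aux n ↥Q X hPQ hX 1 (by norm_num)
  obtain ⟨f₂, h21, h22, h23⟩ := aux n ↥Q X hPQ hX 2 (by norm_num)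
  obtain ⟨f₃, h31, h32, h33⟩ := aux n ↥Q X hPQ hX 3 (by norm_num)
  exact ⟨f₁, f₂, f₃, ⟨h11, htrans _ h12, h13⟩, ⟨h21, htrans _ h22, h23⟩,
    ⟨h31, htrans _ h32, h33⟩⟩
end

section
/- Let G = N₁ × N₂ × ⋯ × N_k be a direct product of finite groups, and let H be a subgroup of G. Then there exist subgroups H_i ≤ N_i for i = 1, …, k such that |H| = |H₁|·|H₂|⋯|H_k|; moreover, if H is solvable then each H_i can be taken solvable. -/
set_option maxHeartbeats 1000000

private lemma telescope_aux (C D : ℕ → ℕ) :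
    ∀ n, (∀ j < n, C j = D j * C (j + 1)) → C 0 = (∏ j ∈ Finset.range n, D j) * C n := by
  intro n
  induction n with
  | zero => simp
  | succ n ih =>
    intro h
    rw [ih (fun j hj => h j (Nat.lt_succ_of_lt hj)), Finset.prod_range_succ,
      h n (Nat.lt_succ_self n), mul_assoc]

/-- If `H` is a subgroup of a direct product `N₁ × ⋯ × N_k` of finite groups, then there
are subgroups `Hᵢ ≤ Nᵢ` with `|H| = |H₁| ⋯ |H_k|`; moreover, if `H` is solvable then the
`Hᵢ` can be taken solvable. -/
theorem subgroup_of_pi_decomposition (k : ℕ) (N : Fin k → Type*)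
    [∀ i, Group (N i)] [∀ i, Finite (N i)] (H : Subgroup (∀ i, N i)) :
    ∃ H' : ∀ i, Subgroup (N i),
      Nat.card H = ∏ i, Nat.card (H' i) ∧
      (IsSolvable H → ∀ i, IsSolvable (H' i)) := by
  classical
  set f : ∀ i : Fin k, (∀ j, N j) →* N i := fun i => Pi.evalMonoidHom N i with hf
  set K : ℕ → Subgroup (∀ j, N j) :=
    fun m => H ⊓ ⨅ i : Fin k, ⨅ _ : (i : ℕ) < m, (f i).ker with hK
  have memK : ∀ m x, x ∈ K m ↔ x ∈ H ∧ ∀ i : Fin k, (i : ℕ) < m → x i = 1 := by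
    intro m x
    simp [hK, Subgroup.mem_iInf, MonoidHom.mem_ker, hf, Pi.evalMonoidHom]
  refine ⟨fun i => (K i).map (f i), ?_, ?_⟩
  · -- cardinality
    have key : ∀ i : Fin k,
        Nat.card (K i) = Nat.card ((K i).map (f i)) * Nat.card (K (i + 1)) := by
      intro i
      set g : K (i : ℕ) →* N i := (f i).comp (K (i : ℕ)).subtype with hg
      have hrange : g.range = (K (i : ℕ)).map (f i) := by
        ext y
        simp [hg, MonoidHom.mem_range, Subgroup.mem_map, Subtype.exists]
      have hker : Nat.card g.ker = Nat.card (K ((i : ℕ) + 1)) := by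
        have h1 : K ((i : ℕ) + 1) = (f i).ker ⊓ K (i : ℕ) := by
          ext x
          simp only [Subgroup.mem_inf, memK, MonoidHom.mem_ker]
          constructor
          · rintro ⟨hH, hall⟩
            exact ⟨hall i (Nat.lt_succ_self _),
              ⟨hH, fun j hj => hall j (Nat.lt_succ_of_lt hj)⟩⟩
          · rintro ⟨hi, ⟨hH, hall⟩⟩
            refine ⟨hH, fun j hj => ?_⟩
            rcases Nat.lt_succ_iff_lt_or_eq.mp hj with h | h
            · exact hall j h
            · have : j = i := Fin.ext h
              subst this; exact hi
        have h2 : g.ker = ((f i).ker).subgroupOf (K (i : ℕ)) := by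
          ext x; simp [hg, Subgroup.mem_subgroupOf, MonoidHom.mem_ker]
        rw [h2, ← Subgroup.inf_subgroupOf_right ((f i).ker) (K (i : ℕ))]
        rw [h1]
        exact Nat.card_congr (Subgroup.subgroupOfEquivOfLe
          (inf_le_right : (f i).ker ⊓ K (i : ℕ) ≤ K (i : ℕ))).toEquiv
      have := Subgroup.card_eq_card_quotient_mul_card_subgroup (g.ker)
      rw [Nat.card_congr (QuotientGroup.quotientKerEquivRange g).toEquiv, hrange, hker] at this
      exact this
    have hK0 : K 0 = H := by
      ext x; simp [memK]
    have hKk : Nat.card (K k) = 1 := by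
      have : K k = ⊥ := by
        ext x
        simp only [memK, Subgroup.mem_bot]
        constructor
        · rintro ⟨-, hall⟩
          funext i; exact hall i i.isLt
        · rintro rfl
          exact ⟨H.one_mem, fun _ _ => rfl⟩
      rw [this, Subgroup.card_bot]
    set D : ℕ → ℕ := fun j => if h : j < k then Nat.card ((K j).map (f ⟨j, h⟩)) else 1 with hD
    have htel : Nat.card (K 0) = (∏ j ∈ Finset.range k, D j) * Nat.card (K k) := by
      apply telescope_aux (fun m => Nat.card (K m)) D
      intro j hj
      have := key ⟨j, hj⟩
      simpa [hD, dif_pos hj] using this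
    rw [hK0, hKk, mul_one] at htel
    rw [htel, ← Fin.prod_univ_eq_prod_range D k]
    apply Finset.prod_congr rfl
    intro i _
    simp [hD, i.isLt]
  · -- solvability
    intro hs i
    have hle : K (i : ℕ) ≤ H := inf_le_left
    haveI : Group.IsSolvable H := hs
    haveI : Group.IsSolvable (K (i : ℕ)) :=
      solvable_of_solvable_injective
        (f := (Subgroup.inclusion hle)) (Subgroup.inclusion_injective hle)
    set g : K (i : ℕ) →* N i := (f i).comp (K (i : ℕ)).subtype with hg
    have hrange : g.range = (K (i : ℕ)).map (f i) := by
      ext y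
      simp [hg, MonoidHom.mem_range, Subgroup.mem_map, Subtype.exists]
    have hsr : IsSolvable g.range := solvable_of_surjective g.rangeRestrict_surjective
    rw [hrange] at hsr
    exact hsr
end

section
/- Let p be a prime, f ≥ 1 an integer, and q = p^f a prime power with q ≥ 4 and q ≠ 16. Then f·q·(q−1) ≤ (q³ − q)^{log_{504}(168)} as real numbers, with equality exactly when q = 8. -/
set_option maxHeartbeats 1000000


-- f^15 ≤ 3^(7f) for all f
lemma pow15_le_three (f : ℕ) : f ^ 15 ≤ 3 ^ (7 * f) := by
  induction f with
  | zero => norm_num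
  | succ n ih =>
    rcases Nat.lt_or_ge n 2 with h | h
    · interval_cases n <;> norm_num
    · have h1 : 2 ^ 15 * (n + 1) ^ 15 ≤ 3 ^ 15 * n ^ 15 := by
        calc 2 ^ 15 * (n + 1) ^ 15 = (2 * (n + 1)) ^ 15 := by ring
          _ ≤ (3 * n) ^ 15 := Nat.pow_le_pow_left (by omega) 15
          _ = 3 ^ 15 * n ^ 15 := by ring
      have h2 : 3 ^ 15 * n ^ 15 ≤ 3 ^ 15 * 3 ^ (7 * n) := Nat.mul_le_mul_left _ ih
      have h3 : 3 ^ 8 ≤ 2 ^ 15 := by norm_num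
      have : 2 ^ 15 * (n + 1) ^ 15 ≤ 3 ^ 8 * (3 ^ 7 * 3 ^ (7 * n)) := by
        calc 2 ^ 15 * (n + 1) ^ 15 ≤ 3 ^ 15 * 3 ^ (7 * n) := le_trans h1 h2
          _ = 3 ^ 8 * (3 ^ 7 * 3 ^ (7 * n)) := by ring
      have : 2 ^ 15 * (n + 1) ^ 15 ≤ 2 ^ 15 * (3 ^ 7 * 3 ^ (7 * n)) :=
        this.trans (Nat.mul_le_mul_right _ h3)
      have := Nat.le_of_mul_le_mul_left this (by norm_num)
      calc (n + 1) ^ 15 ≤ 3 ^ 7 * 3 ^ (7 * n) := this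
        _ = 3 ^ (7 * (n + 1)) := by rw [← pow_add]; ring_nf


lemma pow15_le_two (f : ℕ) (hf : 5 ≤ f) : f ^ 15 ≤ 2 ^ (7 * f) := by
  induction f with
  | zero => omega
  | succ n ih =>
    rcases Nat.lt_or_ge n 5 with h | h
    · interval_cases n <;> first | omega | norm_num
    · have ih := ih h
      have h1 : 5 ^ 15 * (n + 1) ^ 15 ≤ 6 ^ 15 * n ^ 15 := by
        calc 5 ^ 15 * (n + 1) ^ 15 = (5 * (n + 1)) ^ 15 := by ring
          _ ≤ (6 * n) ^ 15 := Nat.pow_le_pow_left (by omega) 15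
          _ = 6 ^ 15 * n ^ 15 := by ring
      have h3 : 6 ^ 15 ≤ 5 ^ 15 * 2 ^ 7 := by norm_num
      have h5 : 5 ^ 15 * (n + 1) ^ 15 ≤ 5 ^ 15 * (2 ^ 7 * 2 ^ (7 * n)) := by
        calc 5 ^ 15 * (n + 1) ^ 15 ≤ 6 ^ 15 * n ^ 15 := h1
          _ ≤ (5 ^ 15 * 2 ^ 7) * n ^ 15 := Nat.mul_le_mul_right _ h3
          _ = 5 ^ 15 * (2 ^ 7 * n ^ 15) := by ring
          _ ≤ 5 ^ 15 * (2 ^ 7 * 2 ^ (7 * n)) := by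
              exact Nat.mul_le_mul_left _ (Nat.mul_le_mul_left _ ih)
      have := Nat.le_of_mul_le_mul_left h5 (by norm_num)
      calc (n + 1) ^ 15 ≤ 2 ^ 7 * 2 ^ (7 * n) := this
        _ = 2 ^ (7 * (n + 1)) := by rw [← pow_add]; ring_nf


lemma key_nat (p f q : ℕ) (hp : p.Prime) (hf : 1 ≤ f) (hq : q = p ^ f)
    (hq4 : 4 ≤ q) (hq16 : q ≠ 16) (hq8 : q ≠ 8)
    (hA : ∀ g : ℕ, g ^ 15 ≤ 3 ^ (7 * g))
    (hB : ∀ g : ℕ, 5 ≤ g → g ^ 15 ≤ 2 ^ (7 * g)) :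
    (f * q * (q - 1)) ^ 45 < (q ^ 3 - q) ^ 37 := by
  have hq1 : 1 ≤ q := by omega
  have hfq : f ^ 45 ≤ q ^ 21 ∨ (f = 2 ∧ q = 4) := by
    rcases Nat.lt_or_ge p 3 with hp2 | hp3
    · have hp2 : p = 2 := by have := hp.two_le; omega
      subst hp2
      -- q = 2^f, q ≥ 4 so f ≥ 2; q ≠ 8,16 so f ≠ 3,4
      have hf2 : 2 ≤ f := by
        by_contra h
        interval_cases f <;> omega
      have hf3 : f ≠ 3 := by rintro rfl; norm_num at hq; omega
      have hf4 : f ≠ 4 := by rintro rfl; norm_num at hq; omega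
      rcases Nat.lt_or_ge f 5 with h5 | h5
      · right; constructor
        · omega
        · have : f = 2 := by omega
          subst this; norm_num at hq; omega
      · left
        have h1 : f ^ 15 ≤ 2 ^ (7 * f) := hB f h5
        have : f ^ 45 ≤ 2 ^ (21 * f) := by
          calc f ^ 45 = (f ^ 15) ^ 3 := by ring
            _ ≤ (2 ^ (7 * f)) ^ 3 := Nat.pow_le_pow_left h1 3
            _ = 2 ^ (21 * f) := by rw [← pow_mul]; ring_nf
        calc f ^ 45 ≤ 2 ^ (21 * f) := this
          _ = (2 ^ f) ^ 21 := by rw [← pow_mul]; ring_nf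
          _ = q ^ 21 := by rw [hq]
    · left
      have h1 : f ^ 15 ≤ 3 ^ (7 * f) := hA f
      calc f ^ 45 = (f ^ 15) ^ 3 := by ring
        _ ≤ (3 ^ (7 * f)) ^ 3 := Nat.pow_le_pow_left h1 3
        _ = 3 ^ (21 * f) := by rw [← pow_mul]; ring_nf
        _ ≤ p ^ (21 * f) := Nat.pow_le_pow_left hp3 _
        _ = (p ^ f) ^ 21 := by rw [← pow_mul]; ring_nf
        _ = q ^ 21 := by rw [hq]
  rcases hfq with hfq | ⟨hf2, hq4'⟩
  · -- general case
    have hqcube : q ^ 3 - q = (q * (q - 1)) * (q + 1) := by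
      obtain ⟨k, rfl⟩ : ∃ k, q = k + 1 := ⟨q - 1, by omega⟩
      simp only [Nat.add_sub_cancel]
      apply Nat.sub_eq_of_eq_add
      ring
    rw [hqcube]
    have hstep : (f * q * (q - 1)) ^ 45 = f ^ 45 * (q * (q - 1)) ^ 45 := by ring
    rw [hstep]
    have h2 : (q * (q - 1)) ^ 45 = (q * (q - 1)) ^ 37 * (q * (q - 1)) ^ 8 := by
      rw [← pow_add]
    have key : f ^ 45 * (q * (q - 1)) ^ 8 < (q + 1) ^ 37 := by
      have e1 : (q * (q - 1)) ^ 8 < (q * q) ^ 8 := by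
        apply Nat.pow_lt_pow_left _ (by norm_num)
        have h' : q - 1 < q := by omega
        exact (Nat.mul_lt_mul_left (show 0 < q by omega)).mpr h'
      calc f ^ 45 * (q * (q - 1)) ^ 8 ≤ q ^ 21 * (q * (q - 1)) ^ 8 :=
            Nat.mul_le_mul_right _ hfq
        _ < q ^ 21 * (q * q) ^ 8 :=
            mul_lt_mul_of_pos_left e1 (pow_pos (by omega) 21)
        _ = q ^ 37 := by ring
        _ < (q + 1) ^ 37 := Nat.pow_lt_pow_left (by omega) (by norm_num)
    have hpos : 0 < (q * (q - 1)) ^ 37 :=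
      pow_pos (Nat.mul_pos (by omega) (by omega)) 37
    calc f ^ 45 * (q * (q - 1)) ^ 45
        = (q * (q - 1)) ^ 37 * (f ^ 45 * (q * (q - 1)) ^ 8) := by ring
      _ < (q * (q - 1)) ^ 37 * (q + 1) ^ 37 := mul_lt_mul_of_pos_left key hpos
      _ = (q * (q - 1) * (q + 1)) ^ 37 := by ring
  · -- q = 4, f = 2
    subst hf2; subst hq4'
    norm_num


lemma real_bridge (a b : ℕ) (ha : 1 ≤ a) (hb : 2 ≤ b) (h : a ^ 45 < b ^ 37) :
    (a : ℝ) < (b : ℝ) ^ Real.logb 504 168 := by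
  have hbR : (1 : ℝ) < (b : ℝ) := by exact_mod_cast hb
  have haR : (0 : ℝ) < (a : ℝ) := by exact_mod_cast ha
  have hlogb : 0 < Real.log b := Real.log_pos hbR
  have h1 : 45 * Real.log a < 37 * Real.log b := by
    have : Real.log ((a : ℝ) ^ 45) < Real.log ((b : ℝ) ^ 37) := by
      apply Real.log_lt_log (by positivity)
      exact_mod_cast h
    rwa [Real.log_pow, Real.log_pow] at this
    -- gives 45 * log a < 37 * log b  (nat cast coefficients)
  have h2 : 37 * Real.log 504 ≤ 45 * Real.log 168 := by
    have hnum : (504 : ℝ) ^ (37:ℕ) ≤ (168 : ℝ) ^ (45:ℕ) := by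
      norm_num
    have := Real.log_le_log (by positivity) hnum
    rwa [Real.log_pow, Real.log_pow] at this
  have hmu : (37 : ℝ) / 45 ≤ Real.logb 504 168 := by
    rw [Real.logb, div_le_div_iff₀ (by norm_num) (Real.log_pos (by norm_num))]
    linarith
  have hloga : Real.log a < Real.logb 504 168 * Real.log b := by
    have : Real.log a < 37 / 45 * Real.log b := by linarith
    calc Real.log a < 37 / 45 * Real.log b := this
      _ ≤ Real.logb 504 168 * Real.log b := by
          apply mul_le_mul_of_nonneg_right hmu hlogb.le
  calc (a : ℝ) = Real.exp (Real.log a) := (Real.exp_log haR).symm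
    _ < Real.exp (Real.logb 504 168 * Real.log b) := Real.exp_lt_exp.mpr hloga
    _ = (b : ℝ) ^ Real.logb 504 168 := by
        rw [Real.rpow_def_of_pos (by linarith), mul_comm]


/-- For a prime power `q = p^f` with `q ≥ 4` and `q ≠ 16`, one has
`f·q·(q−1) ≤ (q³ − q) ^ log_{504} 168`, with equality exactly when `q = 8`. -/
theorem fq_qsub_one_le_rpow (p f q : ℕ) (hp : p.Prime) (hf : 1 ≤ f) (hq : q = p ^ f)
    (hq4 : 4 ≤ q) (hq16 : q ≠ 16) :
    (f : ℝ) * (q : ℝ) * ((q : ℝ) - 1) ≤ ((q : ℝ) ^ 3 - (q : ℝ)) ^ Real.logb 504 168 ∧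
      ((f : ℝ) * (q : ℝ) * ((q : ℝ) - 1) = ((q : ℝ) ^ 3 - (q : ℝ)) ^ Real.logb 504 168 ↔
        q = 8) := by
  by_cases h8 : q = 8
  · subst h8
    have hdvd : p ∣ 8 := hq ▸ dvd_pow_self p (by omega)
    have hp2 : p = 2 := by
      have := (Nat.prime_dvd_prime_iff_eq hp Nat.prime_two).mp
        (hp.dvd_of_dvd_pow (show p ∣ 2 ^ 3 by norm_num [hdvd]))
      exact this
    subst hp2
    have hf3 : f = 3 := Nat.pow_right_injective (le_refl 2) hq.symm
    subst hf3
    have heq : ((3:ℕ) : ℝ) * ((8:ℕ) : ℝ) * (((8:ℕ) : ℝ) - 1)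
        = (((8:ℕ) : ℝ) ^ 3 - ((8:ℕ) : ℝ)) ^ Real.logb 504 168 := by
      have h504 : (((8:ℕ) : ℝ) ^ 3 - ((8:ℕ) : ℝ)) = 504 := by norm_num
      rw [h504, Real.rpow_logb (by norm_num) (by norm_num) (by norm_num)]
      norm_num
    exact ⟨le_of_eq heq, ⟨fun _ => rfl, fun _ => heq⟩⟩
  · have hq1 : 1 ≤ q := by omega
    have hkey := key_nat p f q hp hf hq hq4 hq16 h8 pow15_le_three pow15_le_two
    have ha : 1 ≤ f * q * (q - 1) := by
      have : 1 ≤ q - 1 := by omega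
      exact Nat.one_le_iff_ne_zero.mpr (by positivity)
    have hb : 2 ≤ q ^ 3 - q := by
      have : q ^ 3 = q * q * q := by ring
      nlinarith [hq4, Nat.sub_add_cancel (Nat.le_self_pow (n := 3) (by norm_num) q)]
    have hlt := real_bridge _ _ ha hb hkey
    have ca : ((f * q * (q - 1) : ℕ) : ℝ) = (f : ℝ) * (q : ℝ) * ((q : ℝ) - 1) := by
      push_cast [Nat.cast_sub hq1]
      ring
    have cb : ((q ^ 3 - q : ℕ) : ℝ) = (q : ℝ) ^ 3 - (q : ℝ) := by
      rw [Nat.cast_sub (Nat.le_self_pow (n := 3) (by norm_num) q)]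
      push_cast
      ring
    rw [ca, cb] at hlt
    exact ⟨le_of_lt hlt, ⟨fun h => absurd h (ne_of_lt hlt), fun h => absurd h h8⟩⟩
end

section
/- Let n ≥ 3 be an integer, p a prime, f ≥ 1 an integer, and q = p^f, with (n,q) ≠ (4,2) and (n,q) ≠ (3,4). Then 24^{1/3} · 2f · q^{(n²−n)/2} · ∏_{i=1}^{n−1}(q^i − 1) < q^{μ·(n²−n)/2} as real numbers, where μ = 3·log_{504}(168). -/
open Finset

private lemma aux_f_pow (f : ℕ) (hf : 4 ≤ f) :
    24^17 * 2^50 * f^50 ≤ 2^(69*f) := by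
  induction f, hf using Nat.le_induction with
  | base => decide
  | succ f hf ih =>
    calc 24^17 * 2^50 * (f+1)^50 ≤ 24^17 * 2^50 * (2*f)^50 := by
          gcongr; omega
      _ = 2^50 * (24^17 * 2^50 * f^50) := by ring
      _ ≤ 2^50 * 2^(69*f) := Nat.mul_le_mul_left _ ih
      _ ≤ 2^(69*(f+1)) := by rw [← pow_add]; exact Nat.pow_le_pow_right (by norm_num) (by omega)

private lemma key_nat_s13 (p f N : ℕ) (hp : 2 ≤ p) (hf : 1 ≤ f) (hN : 3 ≤ N)
    (hq4 : p ^ f = 4 → 6 ≤ N) :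
    24^17 * 2^50 * f^50 * ((p^f - 1) * ((p^f)^2 - 1))^50 < (p^f)^(23*N + 150) := by
  set q := p ^ f with hq
  have h2f : 2^f ≤ q := Nat.pow_le_pow_left hp f
  have hq2 : 2 ≤ q := le_trans (by calc 2 = 2^1 := rfl
    _ ≤ 2^f := Nat.pow_le_pow_right (by norm_num) hf) h2f
  have ha : (q - 1) * (q^2 - 1) < q^3 := by
    have h1 : q - 1 < q := by omega
    have h2 : q^2 - 1 < q^2 := by have : 1 ≤ q^2 := Nat.one_le_pow _ _ (by omega); omega
    calc (q - 1) * (q^2 - 1) < q * q^2 := by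
          exact Nat.mul_lt_mul_of_lt_of_le h1 h2.le (by positivity)
      _ = q^3 := by ring
  have hRHS : q^219 ≤ q^(23*N + 150) := Nat.pow_le_pow_right (by omega) (by omega)
  have hcore : 24^17 * 2^50 * f^50 ≤ q^69 →
      24^17 * 2^50 * f^50 * ((q - 1) * (q^2 - 1))^50 < q^(23*N + 150) := by
    intro h
    refine lt_of_lt_of_le ?_ hRHS
    calc 24^17 * 2^50 * f^50 * ((q - 1) * (q^2 - 1))^50
        ≤ q^69 * ((q - 1) * (q^2 - 1))^50 := Nat.mul_le_mul_right _ h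
      _ < q^69 * (q^3)^50 := by
          have := Nat.pow_lt_pow_left ha (n := 50) (by norm_num)
          exact Nat.mul_lt_mul_of_le_of_lt (le_refl _) this (by positivity)
      _ = q^219 := by ring
  rcases Nat.lt_or_ge f 4 with hf4 | hf4
  · interval_cases f
    · -- f = 1
      rw [pow_one] at hq
      by_cases hp2 : p = 2
      · subst hp2
        refine lt_of_lt_of_le ?_ hRHS
        rw [hq]; norm_num
      · by_cases hp3 : p = 3
        · subst hp3
          refine lt_of_lt_of_le ?_ hRHS
          rw [hq]; norm_num
        · have hp4 : 4 ≤ p := by omega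
          apply hcore
          calc 24^17 * 2^50 * 1^50 ≤ 4^69 := by norm_num
            _ ≤ q^69 := Nat.pow_le_pow_left (by omega) _
    · -- f = 2
      by_cases hp2 : p = 2
      · subst hp2
        have hN6 : 6 ≤ N := hq4 (by rw [hq]; norm_num)
        refine lt_of_lt_of_le ?_ (Nat.pow_le_pow_right (by omega) (by omega : 288 ≤ 23*N + 150))
        rw [hq]; decide
      · have hp3 : 3 ≤ p := by omega
        apply hcore
        calc 24^17 * 2^50 * 2^50 ≤ 9^69 := by norm_num
          _ = (3^2)^69 := by norm_num
          _ ≤ q^69 := by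
              apply Nat.pow_le_pow_left
              rw [hq]; exact Nat.pow_le_pow_left hp3 2
    · -- f = 3
      by_cases hp2 : p = 2
      · subst hp2
        refine lt_of_lt_of_le ?_ hRHS
        rw [hq]; norm_num
      · have hp3 : 3 ≤ p := by omega
        apply hcore
        calc 24^17 * 2^50 * 3^50 ≤ 27^69 := by norm_num
          _ = (3^3)^69 := by norm_num
          _ ≤ q^69 := by
              apply Nat.pow_le_pow_left
              rw [hq]; exact Nat.pow_le_pow_left hp3 3
  · -- f ≥ 4
    apply hcore
    calc 24^17 * 2^50 * f^50 ≤ 2^(69*f) := aux_f_pow f hf4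
      _ = (2^f)^69 := by rw [← pow_mul, Nat.mul_comm]
      _ ≤ q^69 := Nat.pow_le_pow_left h2f _

private lemma prod_aux (x : ℝ) (hx : 1 ≤ x) (m : ℕ) (hm : 2 ≤ m) :
    ∏ i ∈ Icc 1 m, (x ^ i - 1) ≤
      (x - 1) * (x ^ 2 - 1) * x ^ (∑ i ∈ Icc 3 m, i) := by
  induction m, hm using Nat.le_induction with
  | base =>
    rw [show Finset.Icc 1 2 = {1, 2} from rfl, show Finset.Icc 3 2 = ∅ from rfl]
    rw [Finset.prod_insert (by decide), Finset.prod_singleton]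
    simp [pow_one]
  | succ m hm ih =>
    rw [Finset.prod_Icc_succ_top (by omega : 1 ≤ m + 1),
      Finset.sum_Icc_succ_top (by omega : 3 ≤ m + 1)]
    have hxm : (1:ℝ) ≤ x ^ (m+1) := one_le_pow₀ hx
    have hpos : (0:ℝ) ≤ (x - 1) * (x ^ 2 - 1) * x ^ (∑ i ∈ Icc 3 m, i) := by
      have h2 : (1:ℝ) ≤ x ^ 2 := one_le_pow₀ hx
      have hx0 : (0:ℝ) ≤ x := by linarith
      exact mul_nonneg (mul_nonneg (by linarith) (by linarith)) (pow_nonneg hx0 _)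
    calc (∏ i ∈ Icc 1 m, (x ^ i - 1)) * (x ^ (m+1) - 1)
        ≤ ((x - 1) * (x ^ 2 - 1) * x ^ (∑ i ∈ Icc 3 m, i)) * x ^ (m+1) := by
          apply mul_le_mul ih (by linarith) ?_ hpos
          have : (1:ℝ) ≤ x ^ (m+1) := hxm
          linarith
      _ = (x - 1) * (x ^ 2 - 1) * x ^ ((∑ i ∈ Icc 3 m, i) + (m+1)) := by rw [pow_add]; ring

private lemma gauss_sum (n : ℕ) (hn : 1 ≤ n) :
    ∑ i ∈ Icc 1 (n - 1), i = (n ^ 2 - n) / 2 := by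
  have h1 : Finset.range n = insert 0 (Icc 1 (n - 1)) := by
    ext i; simp [Finset.mem_range, Finset.mem_Icc]; omega
  have h2 : (∑ i ∈ Finset.range n, i) * 2 = n * (n - 1) := Finset.sum_range_id_mul_two n
  have h3 : ∑ i ∈ Finset.range n, i = ∑ i ∈ Icc 1 (n - 1), i := by
    rw [h1, Finset.sum_insert (by simp), Nat.zero_add]
  have h4 : n * (n - 1) = n ^ 2 - n := by
    rcases n with _ | m
    · simp
    · have : (m + 1) ^ 2 = (m + 1) * m + (m + 1) := by ring
      simp only [Nat.succ_sub_one]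
      omega
  omega

private lemma sum3 (n : ℕ) (hn : 3 ≤ n) :
    (∑ i ∈ Icc 3 (n - 1), i) + 3 = ∑ i ∈ Icc 1 (n - 1), i := by
  have h1 : Icc 1 (n - 1) = insert 1 (insert 2 (Icc 3 (n - 1))) := by
    ext i; simp [Finset.mem_Icc]; omega
  rw [h1, Finset.sum_insert (by simp [Finset.mem_Icc]), Finset.sum_insert (by simp [Finset.mem_Icc])]
  omega

private lemma mu_lb : (123/50 : ℝ) ≤ 3 * Real.logb 504 168 := by
  have h504 : (0:ℝ) < Real.log 504 := Real.log_pos (by norm_num)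
  have h : (123:ℝ) * Real.log 504 ≤ 150 * Real.log 168 := by
    have hle : ((504:ℝ))^(123:ℕ) ≤ 168^(150:ℕ) := by norm_num
    have := Real.log_le_log (by positivity) hle
    rw [Real.log_pow, Real.log_pow] at this
    push_cast at this
    linarith
  rw [Real.logb, mul_div_assoc', div_le_div_iff₀ (by norm_num) h504]
  linarith

/-- The arithmetic inequality `λ·M(G)·|Out(G)| < St(1)^μ` for `G = PSL_n(q)`, `n ≥ 3`,
`(n,q) ∉ {(4,2),(3,4)}`:
`24^(1/3) · 2f · q^((n²−n)/2) · ∏_{i=1}^{n−1}(qⁱ − 1) < q^(μ·(n²−n)/2)`,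
where `μ = 3·log_{504} 168`. -/
theorem psl_n_arith_ineq (n p f q : ℕ) (hn : 3 ≤ n) (hp : p.Prime) (hf : 1 ≤ f)
    (hq : q = p ^ f) (h42 : ¬(n = 4 ∧ q = 2)) (h34 : ¬(n = 3 ∧ q = 4)) :
    (24 : ℝ) ^ ((1 : ℝ) / 3) * (2 * (f : ℝ)) * (q : ℝ) ^ ((n ^ 2 - n) / 2) *
        ∏ i ∈ Finset.Icc 1 (n - 1), ((q : ℝ) ^ i - 1) <
      (q : ℝ) ^ ((3 * Real.logb 504 168) * (((n ^ 2 - n : ℕ) : ℝ) / 2)) := by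
  have hp2 : 2 ≤ p := hp.two_le
  set N := (n ^ 2 - n) / 2 with hNdef
  -- arithmetic facts about N
  have hnn : n ^ 2 = n * n := sq n
  obtain ⟨k, hk⟩ : Even ((n - 1) * n) := by
    have := Nat.even_mul_succ_self (n - 1)
    rwa [show n - 1 + 1 = n by omega] at this
  have hfact : n * n - n = k + k := by
    rw [show n * n - n = (n - 1) * n by rw [Nat.sub_mul, one_mul]]; exact hk
  have h9 : 3 * n ≤ n * n := Nat.mul_le_mul_right n hn
  have hNn : n ^ 2 - n = 2 * N := by rw [hNdef, hnn]; omega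
  have hN3 : 3 ≤ N := by rw [hNdef, hnn]; omega
  -- facts about q
  have hq2 : 2 ≤ q := by
    rw [hq]
    calc 2 = 2^1 := rfl
      _ ≤ 2^f := Nat.pow_le_pow_right (by norm_num) hf
      _ ≤ p^f := Nat.pow_le_pow_left hp2 f
  have hq1R : (1:ℝ) < (q:ℝ) := by exact_mod_cast (by omega : 1 < q)
  have hq0R : (0:ℝ) < (q:ℝ) := by linarith
  have hq4cond : p ^ f = 4 → 6 ≤ N := by
    intro h4
    have hn3 : n ≠ 3 := fun h => h34 ⟨h, by omega⟩
    have h16 : 4 * n ≤ n * n := Nat.mul_le_mul_right n (by omega)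
    rw [hNdef, hnn]; omega
  -- the key natural-number inequality
  have hK := key_nat_s13 p f N hp2 hf hN3 hq4cond
  rw [← hq] at hK
  have hKR : (24:ℝ)^17 * 2^50 * (f:ℝ)^50 * ((((q-1)*(q^2-1) : ℕ)) : ℝ)^50
      < (q:ℝ)^(23*N + 150) := by exact_mod_cast hK
  have haR : ((((q-1)*(q^2-1) : ℕ)) : ℝ) = ((q:ℝ) - 1) * ((q:ℝ)^2 - 1) := by
    have h1 : 1 ≤ q := by omega
    have h2 : 1 ≤ q^2 := Nat.one_le_pow _ _ (by omega)
    rw [Nat.cast_mul, Nat.cast_sub h1, Nat.cast_sub h2, Nat.cast_pow, Nat.cast_one]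
  rw [haR] at hKR
  -- constants
  set c : ℝ := (24:ℝ) ^ ((1:ℝ)/3) with hc
  have hc0 : 0 ≤ c := Real.rpow_nonneg (by norm_num) _
  have hc50 : c ^ (50:ℕ) ≤ (24:ℝ)^(17:ℕ) := by
    rw [hc, ← Real.rpow_natCast ((24:ℝ) ^ ((1:ℝ)/3)) 50, ← Real.rpow_natCast (24:ℝ) 17,
      ← Real.rpow_mul (by norm_num : (0:ℝ) ≤ 24)]
    exact Real.rpow_le_rpow_of_exponent_le (by norm_num) (by norm_num)
  set X : ℝ := c * (2*(f:ℝ)) * (((q:ℝ) - 1) * ((q:ℝ)^2 - 1)) with hX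
  set Y : ℝ := (q:ℝ) ^ ((((23*N + 150 : ℕ)):ℝ)/50) with hY
  have hY0 : 0 ≤ Y := Real.rpow_nonneg hq0R.le _
  have hXY : X < Y := by
    apply lt_of_pow_lt_pow_left₀ 50 hY0
    have hY50 : Y ^ (50:ℕ) = (q:ℝ) ^ (23*N + 150 : ℕ) := by
      rw [hY, ← Real.rpow_natCast ((q:ℝ) ^ ((((23*N + 150 : ℕ)):ℝ)/50)) 50,
        ← Real.rpow_mul hq0R.le, show ((50:ℕ):ℝ) = (50:ℝ) by norm_num,
        div_mul_cancel₀ _ (by norm_num : (50:ℝ) ≠ 0), Real.rpow_natCast]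
    rw [hY50]
    calc X^50 = c^50 * ((2*(f:ℝ))^50 * (((q:ℝ) - 1) * ((q:ℝ)^2 - 1))^50) := by rw [hX]; ring
      _ ≤ (24:ℝ)^17 * ((2*(f:ℝ))^50 * (((q:ℝ) - 1) * ((q:ℝ)^2 - 1))^50) := by
          have hq1 : (0:ℝ) ≤ (q:ℝ) - 1 := by linarith
          have hq21 : (0:ℝ) ≤ (q:ℝ)^2 - 1 := sub_nonneg.2 (one_le_pow₀ hq1R.le)
          apply mul_le_mul_of_nonneg_right hc50
          exact mul_nonneg (by positivity) (pow_nonneg (mul_nonneg hq1 hq21) 50)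
      _ = (24:ℝ)^17 * 2^50 * (f:ℝ)^50 * (((q:ℝ) - 1) * ((q:ℝ)^2 - 1))^50 := by ring
      _ < (q:ℝ)^(23*N + 150 : ℕ) := hKR
  -- the product bound
  set s := ∑ i ∈ Finset.Icc 3 (n-1), i with hsdef
  have hs : s + 3 = N := by
    rw [hsdef, sum3 n hn, gauss_sum n (by omega), hNdef]
  have hP : ∏ i ∈ Finset.Icc 1 (n-1), ((q:ℝ)^i - 1)
      ≤ ((q:ℝ) - 1) * ((q:ℝ)^2 - 1) * (q:ℝ)^s :=
    prod_aux (q:ℝ) (by linarith) (n-1) (by omega)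
  -- main chain
  calc c * (2*(f:ℝ)) * (q:ℝ)^N * ∏ i ∈ Finset.Icc 1 (n-1), ((q:ℝ)^i - 1)
      ≤ c * (2*(f:ℝ)) * (q:ℝ)^N * (((q:ℝ) - 1) * ((q:ℝ)^2 - 1) * (q:ℝ)^s) := by
        apply mul_le_mul_of_nonneg_left hP (by positivity)
    _ = X * (q:ℝ)^(N + s) := by rw [pow_add, hX]; ring
    _ < Y * (q:ℝ)^(N + s) := mul_lt_mul_of_pos_right hXY (by positivity)
    _ = (q:ℝ) ^ ((((N + s : ℕ)):ℝ) + (((23*N + 150 : ℕ)):ℝ)/50) := by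
        rw [Real.rpow_add hq0R, Real.rpow_natCast, hY]; ring
    _ ≤ (q:ℝ) ^ ((3 * Real.logb 504 168) * (((n ^ 2 - n : ℕ) : ℝ) / 2)) := by
        apply Real.rpow_le_rpow_of_exponent_le hq1R.le
        have hcast : ((n ^ 2 - n : ℕ) : ℝ) = 2 * (N:ℝ) := by
          rw [hNn]; push_cast; ring
        rw [hcast]
        have hsR : (s:ℝ) + 3 = (N:ℝ) := by exact_mod_cast hs
        have hNposR : (3:ℝ) ≤ (N:ℝ) := by exact_mod_cast hN3
        have hmul := mul_le_mul_of_nonneg_right mu_lb (by linarith : (0:ℝ) ≤ (N:ℝ))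
        push_cast
        linarith
end

section
/- Let n ≥ 2 be an integer, p a prime, f ≥ 1 an integer, and q = p^f. Then 24^{1/3} · f · q^{2n²−n+1} < q^{μ·n²} as real numbers, where μ = 3·log_{504}(168). -/
lemma mu_ge : (9:ℝ)/4 ≤ 3 * Real.logb 504 168 := by
  have h504 : (1:ℝ) < 504 := by norm_num
  have hlog504 : 0 < Real.log 504 := Real.log_pos h504
  have key : 3 * Real.log 504 ≤ 4 * Real.log 168 := by
    have h1 : Real.log ((504:ℝ)^(3:ℕ)) ≤ Real.log ((168:ℝ)^(4:ℕ)) := by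
      apply Real.log_le_log (by positivity)
      norm_num
    rw [Real.log_pow, Real.log_pow] at h1
    push_cast at h1
    linarith
  have : (3:ℝ)/4 ≤ Real.logb 504 168 := by
    rw [Real.logb, le_div_iff₀ hlog504]
    linarith
  linarith

lemma three_f_le : ∀ f : ℕ, 3 * f ≤ 4 ^ f := by
  intro f
  induction f with
  | zero => norm_num
  | succ k ih =>
    have : (1:ℕ) ≤ 4 ^ k := Nat.one_le_pow _ _ (by norm_num)
    calc 3 * (k + 1) = 3 * k + 3 := by ring
    _ ≤ 4 ^ k + 3 * 4 ^ k := by omega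
    _ = 4 ^ (k+1) := by ring

/-- The arithmetic inequality `λ·M(G)·|Out(G)| < St(1)^μ` for `G = PSp_{2n}(q)`, `n ≥ 2`:
`24^(1/3) · f · q^(2n²−n+1) < q^(μ·n²)`, where `μ = 3·log_{504} 168`. -/
theorem psp_arith_ineq (n p f q : ℕ) (hn : 2 ≤ n) (hp : p.Prime) (hf : 1 ≤ f)
    (hq : q = p ^ f) :
    (24 : ℝ) ^ ((1 : ℝ) / 3) * (f : ℝ) * (q : ℝ) ^ (2 * n ^ 2 - n + 1) <
      (q : ℝ) ^ ((3 * Real.logb 504 168) * ((n : ℝ) ^ 2)) := by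
  have hp2 : 2 ≤ p := hp.two_le
  have hqge : 2 ^ f ≤ q := by
    rw [hq]; exact Nat.pow_le_pow_left hp2 f
  have hq2' : (2:ℝ) ≤ (q:ℝ) := by
    have : 2 ≤ q := le_trans (Nat.one_lt_two_pow_iff.mpr (by omega) : 1 < 2 ^ f) hqge
    exact_mod_cast this
  have hq1 : (1:ℝ) < (q:ℝ) := by linarith
  have hq0 : (0:ℝ) < (q:ℝ) := by linarith
  set μ : ℝ := 3 * Real.logb 504 168 with hμ
  set N : ℕ := 2 * n ^ 2 - n + 1 with hN
  have hNcast : (N : ℝ) = 2 * (n:ℝ)^2 - (n:ℝ) + 1 := by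
    have hle : n ≤ 2 * n ^ 2 := by nlinarith
    rw [hN]
    push_cast [Nat.cast_sub hle]
    ring
  have hgap : (2:ℝ) ≤ μ * (n:ℝ)^2 - (N:ℝ) := by
    have hmu := mu_ge
    have hn2 : (2:ℝ) ≤ (n:ℝ) := by exact_mod_cast hn
    rw [hNcast]
    nlinarith [sq_nonneg ((n:ℝ) - 2)]
  -- 24^(1/3) < 3
  have h24 : (24:ℝ) ^ ((1:ℝ)/3) < 3 := by
    have h27 : ((27:ℝ)) ^ ((1:ℝ)/3) = 3 := by
      rw [show (27:ℝ) = 3 ^ (3:ℕ) by norm_num, ← Real.rpow_natCast (3:ℝ) 3,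
        ← Real.rpow_mul (by norm_num)]
      norm_num
    calc (24:ℝ) ^ ((1:ℝ)/3) < (27:ℝ) ^ ((1:ℝ)/3) :=
        Real.rpow_lt_rpow (by norm_num) (by norm_num) (by norm_num)
      _ = 3 := h27
  -- key bound: 24^(1/3) * f < q^2
  have hq2pow : (4:ℝ) ^ f ≤ (q:ℝ)^2 := by
    have : ((2:ℕ) ^ f : ℝ) ≤ (q:ℝ) := by exact_mod_cast hqge
    have h2f : (0:ℝ) ≤ ((2:ℕ)^f : ℝ) := by positivity
    calc (4:ℝ) ^ f = ((2:ℕ)^f : ℝ)^2 := by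
          push_cast
          rw [← pow_mul, show f * 2 = 2 * f from by ring, pow_mul]
          norm_num
      _ ≤ (q:ℝ)^2 := by nlinarith
  have hmain : (24:ℝ) ^ ((1:ℝ)/3) * f < (q:ℝ)^2 := by
    have hf0 : (0:ℝ) < f := by exact_mod_cast hf
    have h3f : (3:ℝ) * f ≤ (4:ℝ)^f := by exact_mod_cast three_f_le f
    nlinarith
  -- assemble
  have hrw : (q:ℝ) ^ (μ * (n:ℝ)^2) = (q:ℝ) ^ (μ * (n:ℝ)^2 - (N:ℝ)) * (q:ℝ)^N := by
    rw [← Real.rpow_natCast (q:ℝ) N, ← Real.rpow_add hq0]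
    ring_nf
  rw [hrw]
  have hle : (q:ℝ)^2 ≤ (q:ℝ) ^ (μ * (n:ℝ)^2 - (N:ℝ)) := by
    calc (q:ℝ)^2 = (q:ℝ) ^ ((2:ℝ)) := by rw [← Real.rpow_natCast (q:ℝ) 2]; norm_num
      _ ≤ _ := Real.rpow_le_rpow_of_exponent_le (le_of_lt hq1) hgap
  have hqN : (0:ℝ) < (q:ℝ)^N := by positivity
  calc (24 : ℝ) ^ ((1 : ℝ) / 3) * (f : ℝ) * (q : ℝ) ^ N
      < (q:ℝ)^2 * (q:ℝ)^N := by exact mul_lt_mul_of_pos_right hmain hqN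
    _ ≤ (q:ℝ) ^ (μ * (n:ℝ)^2 - (N:ℝ)) * (q:ℝ)^N := by
        exact mul_le_mul_of_nonneg_right hle hqN.le
end
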